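/- arXiv:1705.03180 — 2 statements merged into one kernel-verified Lean document; each statement's English description precedes it below -/
import Mathlib

section
/- Let T be a normal space and U₀, …, U_{n+1} an open cover of T with empty total intersection. If Φ = (φᵢ) and Ψ = (ψᵢ) are two partitions of unity subordinate to the cover, then the associated maps f_Φ(x) = Σᵢ φᵢ(x)vᵢ and f_Ψ(x) = Σᵢ ψᵢ(x)vᵢ into ∂Δ^{n+1} are homotopic as maps T → ∂Δ^{n+1}. -/
open Set unitInterval

noncomputable section

/-- `φ` is a partition of unity subordinate to the cover `U`: each `φ i` takes values in
`[0,1]`, the (closed) support of `φ i` is contained in `U i`, and the `φ i` sum to `1`. -/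
structure IsSubordinatePartitionOfUnity {T : Type} [TopologicalSpace T] {m : ℕ}
    (U : Fin m → Set T) (φ : Fin m → C(T, ℝ)) : Prop where
  nonneg : ∀ i x, 0 ≤ φ i x
  le_one : ∀ i x, φ i x ≤ 1
  subordinate : ∀ i, tsupport (φ i) ⊆ U i
  sum_eq_one : ∀ x, ∑ i, φ i x = 1

/-- The boundary `∂Δ^{n+1}` of the simplex with vertices `v 0, …, v (n+1)`: convex
combinations `Σ tᵢ • vᵢ` with `tᵢ ≥ 0`, `Σ tᵢ = 1` and at least one `tᵢ = 0`. -/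
def simplexBoundary {n : ℕ} (v : Fin (n+2) → EuclideanSpace ℝ (Fin (n+1))) :
    Set (EuclideanSpace ℝ (Fin (n+1))) :=
  {p | ∃ t : Fin (n+2) → ℝ, (∀ i, 0 ≤ t i) ∧ (∑ i, t i) = 1 ∧ (∃ i, t i = 0) ∧
    p = ∑ i, t i • v i}

/-- If `Φ = (φᵢ)` and `Ψ = (ψᵢ)` are two partitions of unity subordinate to an open cover
`U₀, …, U_{n+1}` (with empty total intersection) of a normal space `T`, then the associated
maps `f_Φ(x) = Σᵢ φᵢ(x) • vᵢ` and `f_Ψ(x) = Σᵢ ψᵢ(x) • vᵢ` are homotopic as maps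
`T → ∂Δ^{n+1}`: there is a homotopy through maps taking values in `∂Δ^{n+1}`. -/
theorem assoc_maps_homotopic (n : ℕ) (T : Type)
    [TopologicalSpace T] [NormalSpace T]
    (U : Fin (n+2) → Set T) (hUopen : ∀ i, IsOpen (U i))
    (hUcover : (⋃ i, U i) = Set.univ) (hUempty : (⋂ i, U i) = ∅)
    (φ ψ : Fin (n+2) → C(T, ℝ))
    (hφ : IsSubordinatePartitionOfUnity U φ) (hψ : IsSubordinatePartitionOfUnity U ψ)
    (v : Fin (n+2) → EuclideanSpace ℝ (Fin (n+1))) (hv : AffineIndependent ℝ v) :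
    ∃ H : C(T × unitInterval, EuclideanSpace ℝ (Fin (n+1))),
      (∀ p, H p ∈ simplexBoundary v) ∧
      (∀ x : T, H (x, 0) = ∑ i, φ i x • v i) ∧
      (∀ x : T, H (x, 1) = ∑ i, ψ i x • v i) := by

  refine ⟨⟨fun p => ∑ i, ((1 - (p.2 : ℝ)) * φ i p.1 + (p.2 : ℝ) * ψ i p.1) • v i, ?_⟩,
    ?_, ?_, ?_⟩
  · apply continuous_finset_sum
    intro i _
    exact ((((continuous_const.sub (continuous_subtype_val.comp continuous_snd)).mul
      ((φ i).continuous.comp continuous_fst)).add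
      ((continuous_subtype_val.comp continuous_snd).mul
      ((ψ i).continuous.comp continuous_fst)))).smul continuous_const
  · rintro ⟨x, s⟩
    refine ⟨fun i => (1 - (s : ℝ)) * φ i x + (s : ℝ) * ψ i x, ?_, ?_, ?_, rfl⟩
    · intro i
      have h1 : (0:ℝ) ≤ 1 - (s:ℝ) := by linarith [s.2.2]
      exact add_nonneg (mul_nonneg h1 (hφ.nonneg i x)) (mul_nonneg s.2.1 (hψ.nonneg i x))
    · rw [Finset.sum_add_distrib, ← Finset.mul_sum, ← Finset.mul_sum,
        hφ.sum_eq_one, hψ.sum_eq_one]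
      ring
    · have : x ∉ ⋂ i, U i := by rw [hUempty]; exact notMem_empty x
      rw [mem_iInter] at this
      push_neg at this
      obtain ⟨i, hi⟩ := this
      have hφ0 : φ i x = 0 :=
        image_eq_zero_of_notMem_tsupport (fun h => hi (hφ.subordinate i h))
      have hψ0 : ψ i x = 0 :=
        image_eq_zero_of_notMem_tsupport (fun h => hi (hψ.subordinate i h))
      exact ⟨i, by simp only []; rw [hφ0, hψ0]; ring⟩
  · intro x
    simp
  · intro x
    simp
end
end

section
/- Let T be a normal space and (Sᵢ)_{i=0}^{n+1} an open cover of T with empty total intersection, with associated map f_S : T → ∂Δ^{n+1}. If F : T × [0,1] → ∂Δ^{n+1} is a homotopy with F(·,0) = f_S, then the preimages Qᵢ = F⁻¹(Bᵢ) of the open vertex stars form an open cover of T × [0,1] with empty total intersection whose restriction to T × {0} refines in the same pattern as the original construction (each Qᵢ ∩ (T × {0}) contains the support of the i-th partition function used to define f_S). -/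
open Set unitInterval

noncomputable section

/-- The open star `Bᵢ ⊆ ∂Δ^{n+1}` of the vertex `vᵢ`: points of the boundary of the simplex
whose `i`-th barycentric coordinate is positive. -/
def openStar {n : ℕ} (v : Fin (n+2) → EuclideanSpace ℝ (Fin (n+1))) (i : Fin (n+2)) :
    Set (EuclideanSpace ℝ (Fin (n+1))) :=
  {p | ∃ t : Fin (n+2) → ℝ, (∀ j, 0 ≤ t j) ∧ (∑ j, t j) = 1 ∧ (∃ j, t j = 0) ∧
    p = ∑ j, t j • v j ∧ 0 < t i}

/-- Let `S` be an open cover with empty total intersection of a normal space `T`, `φ` a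
subordinate partition of unity with associated map `f_S(x) = Σ φᵢ(x) • vᵢ`, and
`F : T × [0,1] → ∂Δ^{n+1}` a homotopy with `F(·,0) = f_S`. Then the preimages
`Qᵢ = F⁻¹(Bᵢ)` of the open vertex stars form an open cover of `T × [0,1]` with empty total
intersection, and on `T × {0}` each `Qᵢ` contains the (open) support of `φᵢ`. -/
theorem preimages_of_open_stars_under_homotopy (n : ℕ) (T : Type)
    [TopologicalSpace T] [NormalSpace T]
    (S : Fin (n+2) → Set T) (hSopen : ∀ i, IsOpen (S i))
    (hScover : (⋃ i, S i) = Set.univ) (hSempty : (⋂ i, S i) = ∅)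
    (φ : Fin (n+2) → C(T, ℝ)) (hφ : IsSubordinatePartitionOfUnity S φ)
    (v : Fin (n+2) → EuclideanSpace ℝ (Fin (n+1))) (hv : AffineIndependent ℝ v)
    (F : C(T × unitInterval, EuclideanSpace ℝ (Fin (n+1))))
    (hFmem : ∀ p, F p ∈ simplexBoundary v)
    (hF0 : ∀ x : T, F (x, 0) = ∑ i, φ i x • v i) :
    (∀ i, IsOpen (F ⁻¹' openStar v i)) ∧
    (⋃ i, F ⁻¹' openStar v i) = Set.univ ∧
    (⋂ i, F ⁻¹' openStar v i) = ∅ ∧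
    (∀ i (x : T), φ i x ≠ 0 → (x, (0 : unitInterval)) ∈ F ⁻¹' openStar v i) := by
  have htot : affineSpan ℝ (Set.range v) = ⊤ := by
    rw [hv.affineSpan_eq_top_iff_card_eq_finrank_add_one]; simp
  let b : AffineBasis (Fin (n+2)) ℝ (EuclideanSpace ℝ (Fin (n+1))) := ⟨v, hv, htot⟩
  have hcoord : ∀ (t : Fin (n+2) → ℝ), (∑ i, t i) = 1 → ∀ i, b.coord i (∑ j, t j • v j) = t i := by
    intro t ht i
    rw [← Finset.univ.affineCombination_eq_linear_combination v t ht]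
    exact b.coord_apply_combination_of_mem (Finset.mem_univ i) ht
  have hset : ∀ i, F ⁻¹' openStar v i = F ⁻¹' {p | 0 < b.coord i p} := by
    intro i
    ext p
    simp only [mem_preimage, mem_setOf_eq]
    constructor
    · rintro ⟨t, ht0, ht1, htz, hp, hti⟩
      rw [hp, hcoord t ht1 i]; exact hti
    · intro hpos
      obtain ⟨t, ht0, ht1, htz, hp⟩ := hFmem p
      refine ⟨t, ht0, ht1, htz, hp, ?_⟩
      rw [hp, hcoord t ht1 i] at hpos; exact hpos
  refine ⟨?_, ?_, ?_, ?_⟩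
  · intro i
    rw [hset i]
    exact (isOpen_lt continuous_const ((b.coord i).continuous_of_finiteDimensional)).preimage F.continuous
  · ext p
    simp only [mem_iUnion, mem_preimage, mem_univ, iff_true]
    obtain ⟨t, ht0, ht1, htz, hp⟩ := hFmem p
    have : ∃ i, 0 < t i := by
      by_contra h
      push_neg at h
      have : (∑ i, t i) = 0 := Finset.sum_eq_zero fun i _ => le_antisymm (h i) (ht0 i)
      rw [ht1] at this; norm_num at this
    obtain ⟨i, hi⟩ := this
    exact ⟨i, t, ht0, ht1, htz, hp, hi⟩
  · ext p
    simp only [mem_iInter, mem_preimage, mem_empty_iff_false, iff_false]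
    intro h
    obtain ⟨t, ht0, ht1, ⟨j, hj⟩, hp⟩ := hFmem p
    obtain ⟨t', ht0', ht1', _, hp', htj'⟩ := h j
    have h1 : b.coord j (F p) = t j := by rw [hp]; exact hcoord t ht1 j
    have h2 : b.coord j (F p) = t' j := by rw [hp']; exact hcoord t' ht1' j
    rw [h1, hj] at h2
    exact absurd h2.symm (ne_of_gt htj')
  · intro i x hix
    have hxzero : ∃ j, φ j x = 0 := by
      by_contra h
      push_neg at h
      have hx : x ∈ ⋂ j, S j := mem_iInter.mpr fun j =>
        hφ.subordinate j (subset_tsupport _ (h j))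
      rw [hSempty] at hx; exact hx
    obtain ⟨j, hj⟩ := hxzero
    exact ⟨fun k => φ k x, fun k => hφ.nonneg k x, hφ.sum_eq_one x, ⟨j, hj⟩, hF0 x,
      lt_of_le_of_ne (hφ.nonneg i x) (Ne.symm hix)⟩
end
end
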